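/- Let Δ ≠ 0, let ℓ and m be positive integers with ℓ ≤ m, and let S ⊆ ℤ satisfy [−ℓ, ℓ] ⊆ [−m, m] ⊆ S. Then | P[ |argmin_{t∈[−m,m]} X_Δ(t)| ≤ ℓ ] − P[ |argmin_{t∈S} X_Δ(t)| ≤ ℓ ] | ≤ (2·e^{−Δ²/8}/(1 − e^{−Δ²/8}))·e^{−m·Δ²/8}, where the argmins denote the respective a.s. unique minimizers. -/

import Mathlib

open MeasureTheory ProbabilityTheory Filter

/-- Two-sided Gaussian random walk with drift `|Δ|/2`. -/
noncomputable def walkX {Ω : Type*} (ε : ℤ → Ω → ℝ) (Δ : ℝ) (i : ℤ) (ω : Ω) : ℝ :=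
  if 0 < i then Real.sign Δ * (∑ j ∈ Finset.Icc (1 : ℤ) i, ε j ω) + (i : ℝ) * |Δ| / 2
  else if i < 0 then
    -(Real.sign Δ * (∑ j ∈ Finset.Icc (i + 1) (0 : ℤ), ε j ω)) + ((|i| : ℤ) : ℝ) * |Δ| / 2
  else 0

/-- `L` is almost surely the unique minimizer of the process `f` over the set `S ⊆ ℤ`. -/
def IsASUniqueArgminOn {Ω : Type*} [MeasurableSpace Ω] (μ : Measure Ω)
    (f : ℤ → Ω → ℝ) (S : Set ℤ) (L : Ω → ℤ) : Prop :=
  ∀ᵐ ω ∂μ, L ω ∈ S ∧ ∀ t ∈ S, t ≠ L ω → f (L ω) ω < f t ω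

lemma gauss_pdf_mul_exp (t x : ℝ) :
    gaussianPDFReal 0 1 x * Real.exp (t * x) = Real.exp (t ^ 2 / 2) * gaussianPDFReal t 1 x := by
  simp only [gaussianPDFReal, NNReal.coe_one, mul_one, sub_zero]
  rw [mul_assoc, ← Real.exp_add, mul_comm (Real.exp (t ^ 2 / 2)), mul_assoc, ← Real.exp_add]
  congr 1
  ring_nf

lemma gaussianReal_one_eq :
    gaussianReal 0 1 =
      MeasureTheory.volume.withDensity
        (fun x => (((gaussianPDFReal 0 1 x).toNNReal : NNReal) : ENNReal)) := by
  rw [gaussianReal_of_var_ne_zero 0 one_ne_zero]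
  rfl

lemma smul_pdf_eq (t : ℝ) :
    (fun x => ((gaussianPDFReal 0 1 x).toNNReal : NNReal) • Real.exp (t * x))
      = fun x => Real.exp (t ^ 2 / 2) * gaussianPDFReal t 1 x := by
  funext x
  rw [NNReal.smul_def, smul_eq_mul, Real.coe_toNNReal _ (gaussianPDFReal_nonneg 0 1 x),
    gauss_pdf_mul_exp]

lemma integrable_exp_mul_gaussian (t : ℝ) :
    Integrable (fun x => Real.exp (t * x)) (gaussianReal 0 1) := by
  rw [gaussianReal_one_eq,
    integrable_withDensity_iff_integrable_smul ((measurable_gaussianPDFReal 0 1).real_toNNReal)]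
  rw [smul_pdf_eq]
  exact (integrable_gaussianPDFReal t 1).const_mul _

lemma integral_exp_mul_gaussian (t : ℝ) :
    ∫ x, Real.exp (t * x) ∂(gaussianReal 0 1) = Real.exp (t ^ 2 / 2) := by
  rw [gaussianReal_one_eq,
    integral_withDensity_eq_integral_smul ((measurable_gaussianPDFReal 0 1).real_toNNReal)]
  rw [smul_pdf_eq, MeasureTheory.integral_const_mul,
    integral_gaussianPDFReal_eq_one t one_ne_zero, mul_one]

lemma integrable_exp_mul_std {Ω : Type*} [MeasurableSpace Ω] {μ : Measure Ω} {X : Ω → ℝ}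
    (hX : Measurable X) (hg : Measure.map X μ = gaussianReal 0 1) (t : ℝ) :
    Integrable (fun ω => Real.exp (t * X ω)) μ := by
  have h : Integrable (fun x => Real.exp (t * x)) (Measure.map X μ) := by
    rw [hg]; exact integrable_exp_mul_gaussian t
  exact (integrable_map_measure
    (Real.measurable_exp.comp (measurable_const_mul t)).aestronglyMeasurable
    hX.aemeasurable).mp h

lemma mgf_gaussian_std {Ω : Type*} [MeasurableSpace Ω] {μ : Measure Ω} {X : Ω → ℝ}
    (hX : Measurable X) (hg : Measure.map X μ = gaussianReal 0 1) (t : ℝ) :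
    mgf X μ t = Real.exp (t ^ 2 / 2) := by
  have h := integral_map (μ := μ) (f := fun x => Real.exp (t * x)) hX.aemeasurable
    (Real.measurable_exp.comp (measurable_const_mul t)).aestronglyMeasurable
  rw [hg, integral_exp_mul_gaussian] at h
  rw [mgf, ← h]

lemma tail_bound {Ω : Type*} [MeasurableSpace Ω] (μ : Measure Ω) [IsProbabilityMeasure μ]
    (ε : ℤ → Ω → ℝ) (hmeas : ∀ i, Measurable (ε i))
    (hindep : iIndepFun ε μ)
    (hgauss : ∀ i, Measure.map (ε i) μ = gaussianReal 0 1)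
    {c : ℝ} (hc : c = 1 ∨ c = -1) (F : Finset ℤ) {δ : ℝ} (hδ : 0 < δ) :
    μ {ω | c * (∑ j ∈ F, ε j ω) + (F.card : ℝ) * δ / 2 ≤ 0}
      ≤ ENNReal.ofReal (Real.exp (-(F.card : ℝ) * δ ^ 2 / 8)) := by
  set η : ℤ → Ω → ℝ := fun j ω => c * ε j ω with hη
  have hc2 : c ^ 2 = 1 := by rcases hc with h | h <;> simp [h]
  have hηmeas : ∀ i, Measurable (η i) := fun i => (hmeas i).const_mul c
  have hηindep : iIndepFun η μ :=
    hindep.comp (fun _ x => c * x) (fun _ => measurable_const_mul c)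
  have hηgauss : ∀ i, Measure.map (η i) μ = gaussianReal 0 1 := by
    intro i
    have h : Measure.map (η i) μ = Measure.map (c * ·) (Measure.map (ε i) μ) := by
      rw [Measure.map_map (measurable_const_mul c) (hmeas i)]; rfl
    rw [h, hgauss i, gaussianReal_map_const_mul c, mul_zero]
    congr 1
    rw [mul_one]
    exact NNReal.eq (by simpa using hc2)
  set t : ℝ := -δ / 2 with htdef
  have hint : ∀ i ∈ F, Integrable (fun ω => Real.exp (t * η i ω)) μ := fun i _ =>
    integrable_exp_mul_std (hηmeas i) (hηgauss i) t
  have hintsum := hηindep.integrable_exp_mul_sum hηmeas hint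
  have hch := measure_le_le_exp_mul_mgf (μ := μ) (X := ∑ j ∈ F, η j)
      (-(F.card : ℝ) * δ / 2) (by rw [htdef]; linarith) hintsum
  have hmgf : mgf (∑ j ∈ F, η j) μ t = Real.exp (t ^ 2 / 2) ^ F.card := by
    rw [hηindep.mgf_sum hηmeas F,
      Finset.prod_congr rfl fun i _ => mgf_gaussian_std (hηmeas i) (hηgauss i) t,
      Finset.prod_const]
  have hset : {ω | c * (∑ j ∈ F, ε j ω) + (F.card : ℝ) * δ / 2 ≤ 0}
      = {ω | (∑ j ∈ F, η j) ω ≤ -(F.card : ℝ) * δ / 2} := by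
    ext ω
    simp only [Set.mem_setOf_eq, Finset.sum_apply, hη, ← Finset.mul_sum]
    constructor <;> intro h <;> linarith
  rw [hset]
  rw [← ENNReal.ofReal_toReal (measure_ne_top μ _)]
  apply ENNReal.ofReal_le_ofReal
  refine hch.trans ?_
  rw [hmgf, ← Real.exp_nat_mul, ← Real.exp_add]
  apply le_of_eq
  congr 1
  rw [htdef]
  ring

lemma walk_tail {Ω : Type*} [MeasurableSpace Ω] (μ : Measure Ω) [IsProbabilityMeasure μ]
    (ε : ℤ → Ω → ℝ) (hmeas : ∀ i, Measurable (ε i))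
    (hindep : iIndepFun ε μ)
    (hgauss : ∀ i, Measure.map (ε i) μ = gaussianReal 0 1)
    (Δ : ℝ) (hΔ : Δ ≠ 0) (t : ℤ) (ht : t ≠ 0) :
    μ {ω | walkX ε Δ t ω ≤ 0}
      ≤ ENNReal.ofReal (Real.exp (-((|t| : ℤ) : ℝ) * Δ ^ 2 / 8)) := by
  have hδ : 0 < |Δ| := abs_pos.mpr hΔ
  have hsq : |Δ| ^ 2 = Δ ^ 2 := sq_abs Δ
  have hsign : Real.sign Δ = 1 ∨ Real.sign Δ = -1 := by
    rcases hΔ.lt_or_gt with h | h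
    · exact Or.inr (Real.sign_of_neg h)
    · exact Or.inl (Real.sign_of_pos h)
  rcases ht.lt_or_gt with htneg | htpos
  · -- t < 0
    have hcard : (((Finset.Icc (t + 1) (0 : ℤ)).card : ℕ) : ℝ) = ((|t| : ℤ) : ℝ) := by
      rw [Int.card_Icc]
      have : (0 + 1 - (t + 1)) = -t := by ring
      rw [this]
      rw [abs_of_neg htneg]
      have h2 : ((-t).toNat : ℤ) = -t := Int.toNat_of_nonneg (by omega)
      exact_mod_cast congrArg (fun z : ℤ => (z : ℝ)) h2
    have hset : {ω | walkX ε Δ t ω ≤ 0}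
        = {ω | (-Real.sign Δ) * (∑ j ∈ Finset.Icc (t + 1) (0 : ℤ), ε j ω)
            + (((Finset.Icc (t + 1) (0 : ℤ)).card : ℕ) : ℝ) * |Δ| / 2 ≤ 0} := by
      ext ω
      simp only [Set.mem_setOf_eq, walkX, if_neg (by omega : ¬ (0 : ℤ) < t),
        if_pos htneg, hcard, neg_mul]
    rw [hset]
    refine (tail_bound μ ε hmeas hindep hgauss
      (by rcases hsign with h | h <;> simp [h] : -Real.sign Δ = 1 ∨ -Real.sign Δ = -1)
      (Finset.Icc (t + 1) (0 : ℤ)) hδ).trans_eq ?_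
    rw [hcard, hsq]
  · -- 0 < t
    have hcard : (((Finset.Icc (1 : ℤ) t).card : ℕ) : ℝ) = ((|t| : ℤ) : ℝ) := by
      rw [Int.card_Icc]
      have : (t + 1 - 1) = t := by ring
      rw [this, abs_of_pos htpos]
      have h2 : (t.toNat : ℤ) = t := Int.toNat_of_nonneg (by omega)
      exact_mod_cast congrArg (fun z : ℤ => (z : ℝ)) h2
    have hset : {ω | walkX ε Δ t ω ≤ 0}
        = {ω | Real.sign Δ * (∑ j ∈ Finset.Icc (1 : ℤ) t, ε j ω)
            + (((Finset.Icc (1 : ℤ) t).card : ℕ) : ℝ) * |Δ| / 2 ≤ 0} := by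
      ext ω
      simp only [Set.mem_setOf_eq, walkX, if_pos htpos, hcard]
      rw [abs_of_pos htpos]
    rw [hset]
    refine (tail_bound μ ε hmeas hindep hgauss hsign (Finset.Icc (1 : ℤ) t) hδ).trans_eq ?_
    rw [hcard, hsq]

/-- For `[−ℓ,ℓ] ⊆ [−m,m] ⊆ S`,
`|P[|argmin_{[−m,m]} X_Δ| ≤ ℓ] − P[|argmin_S X_Δ| ≤ ℓ]|
  ≤ (2 e^{−Δ²/8}/(1 − e^{−Δ²/8})) e^{−mΔ²/8}`. -/
theorem argmin_prob_comparison
    {Ω : Type*} [MeasurableSpace Ω] (μ : Measure Ω) [IsProbabilityMeasure μ]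
    (ε : ℤ → Ω → ℝ)
    (hmeas : ∀ i, Measurable (ε i))
    (hindep : iIndepFun ε μ)
    (hgauss : ∀ i, Measure.map (ε i) μ = gaussianReal 0 1)
    (Δ : ℝ) (hΔ : Δ ≠ 0) (ℓ m : ℕ) (hℓ : 0 < ℓ) (hℓm : ℓ ≤ m)
    (S : Set ℤ) (hS : Set.Icc (-(m : ℤ)) (m : ℤ) ⊆ S)
    (Lm LS : Ω → ℤ)
    (hLm : IsASUniqueArgminOn μ (walkX ε Δ) (Set.Icc (-(m : ℤ)) (m : ℤ)) Lm)
    (hLS : IsASUniqueArgminOn μ (walkX ε Δ) S LS) :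
    |(μ {ω | |Lm ω| ≤ (ℓ : ℤ)}).toReal - (μ {ω | |LS ω| ≤ (ℓ : ℤ)}).toReal|
      ≤ 2 * Real.exp (-(Δ ^ 2) / 8) / (1 - Real.exp (-(Δ ^ 2) / 8)) *
          Real.exp (-(m : ℝ) * Δ ^ 2 / 8) := by
  classical
  set r := Real.exp (-(Δ ^ 2) / 8) with hr
  have hr0 : 0 < r := Real.exp_pos _
  have hr1 : r < 1 := by
    rw [hr, Real.exp_lt_one_iff]
    have h : 0 < Δ ^ 2 := by positivity
    linarith
  have h1r : 0 < 1 - r := by linarith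
  have hrpow : ∀ n : ℕ, Real.exp (-(n : ℝ) * Δ ^ 2 / 8) = r ^ n := by
    intro n
    rw [hr, ← Real.exp_nat_mul]
    congr 1
    ring
  set E : Set Ω := ⋃ k : ℕ,
    ({ω | walkX ε Δ ((m : ℤ) + 1 + (k : ℤ)) ω ≤ 0}
      ∪ {ω | walkX ε Δ (-((m : ℤ) + 1 + (k : ℤ))) ω ≤ 0}) with hE
  have hkey : ∀ᵐ ω ∂μ, |LS ω| ≤ (m : ℤ) → Lm ω = LS ω := by
    filter_upwards [hLm, hLS] with ω h1 h2 hle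
    by_contra hne
    have hmem : LS ω ∈ Set.Icc (-(m : ℤ)) (m : ℤ) :=
      Set.mem_Icc.mpr ⟨neg_le_of_abs_le hle, le_of_abs_le hle⟩
    have ha := h1.2 (LS ω) hmem (fun h => hne h.symm)
    have hb := h2.2 (Lm ω) (hS h1.1) hne
    exact absurd (ha.trans hb) (lt_irrefl _)
  have hEev : ∀ᵐ ω ∂μ, (m : ℤ) < |LS ω| → ω ∈ E := by
    filter_upwards [hLS] with ω h2 hgt
    have h0S : (0 : ℤ) ∈ S := hS (Set.mem_Icc.mpr ⟨by omega, by omega⟩)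
    have hne0 : LS ω ≠ 0 := by
      intro h
      rw [h] at hgt
      simp at hgt
      omega
    have hlt : walkX ε Δ (LS ω) ω < walkX ε Δ 0 ω := h2.2 0 h0S (Ne.symm hne0)
    have hX0 : walkX ε Δ 0 ω = 0 := by simp [walkX]
    rw [hE, Set.mem_iUnion]
    rcases le_or_gt 0 (LS ω) with hpos | hneg
    · refine ⟨(LS ω - ((m : ℤ) + 1)).toNat, Or.inl ?_⟩
      have heq : (m : ℤ) + 1 + ((LS ω - ((m : ℤ) + 1)).toNat : ℤ) = LS ω := by
        rw [Int.toNat_of_nonneg (by rw [abs_of_nonneg hpos] at hgt; omega)]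
        ring
      simp only [Set.mem_setOf_eq, heq]
      linarith
    · refine ⟨(-(LS ω) - ((m : ℤ) + 1)).toNat, Or.inr ?_⟩
      have heq : -((m : ℤ) + 1 + ((-(LS ω) - ((m : ℤ) + 1)).toNat : ℤ)) = LS ω := by
        rw [Int.toNat_of_nonneg (by rw [abs_of_neg hneg] at hgt; omega)]
        ring
      simp only [Set.mem_setOf_eq, heq]
      linarith
  set A := {ω | |Lm ω| ≤ (ℓ : ℤ)} with hA
  set B := {ω | |LS ω| ≤ (ℓ : ℤ)} with hB
  have hBA : μ B ≤ μ A := by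
    apply measure_mono_ae
    filter_upwards [hkey] with ω hk hB'
    have hEq : Lm ω = LS ω := hk (le_trans hB' (by exact_mod_cast hℓm))
    show |Lm ω| ≤ (ℓ : ℤ)
    rw [hEq]
    exact hB'
  have hAB : μ A ≤ μ B + μ E := by
    refine le_trans (measure_mono_ae ?_) (measure_union_le B E)
    filter_upwards [hkey, hEev] with ω hk hEo hA'
    by_cases hc : |LS ω| ≤ (m : ℤ)
    · left
      show |LS ω| ≤ (ℓ : ℤ)
      rw [← hk hc]
      exact hA'
    · exact Or.inr (hEo (not_le.mp hc))
  have hEbound : μ E ≤ ENNReal.ofReal (2 * r ^ (m + 1) * (1 - r)⁻¹) := by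
    rw [hE]
    refine le_trans (measure_iUnion_le _) ?_
    have hterm : ∀ k : ℕ,
        μ ({ω | walkX ε Δ ((m : ℤ) + 1 + (k : ℤ)) ω ≤ 0}
          ∪ {ω | walkX ε Δ (-((m : ℤ) + 1 + (k : ℤ))) ω ≤ 0})
        ≤ ENNReal.ofReal (2 * r ^ (m + 1) * r ^ k) := by
      intro k
      have hb1 := walk_tail μ ε hmeas hindep hgauss Δ hΔ ((m : ℤ) + 1 + (k : ℤ)) (by omega)
      have hb2 := walk_tail μ ε hmeas hindep hgauss Δ hΔ (-((m : ℤ) + 1 + (k : ℤ))) (by omega)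
      have he1 : ((|(m : ℤ) + 1 + (k : ℤ)| : ℤ) : ℝ) = ((m + 1 + k : ℕ) : ℝ) := by
        rw [abs_of_nonneg (by omega : (0 : ℤ) ≤ (m : ℤ) + 1 + (k : ℤ))]
        push_cast
        ring
      have he2 : ((|-((m : ℤ) + 1 + (k : ℤ))| : ℤ) : ℝ) = ((m + 1 + k : ℕ) : ℝ) := by
        rw [abs_neg, abs_of_nonneg (by omega : (0 : ℤ) ≤ (m : ℤ) + 1 + (k : ℤ))]
        push_cast
        ring
      rw [he1, hrpow (m + 1 + k)] at hb1
      rw [he2, hrpow (m + 1 + k)] at hb2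
      refine le_trans (measure_union_le _ _) ?_
      refine le_trans (add_le_add hb1 hb2) ?_
      rw [← ENNReal.ofReal_add (by positivity) (by positivity)]
      apply ENNReal.ofReal_le_ofReal
      rw [pow_add]
      ring_nf
      rfl
    refine le_trans (ENNReal.tsum_le_tsum hterm) ?_
    rw [← ENNReal.ofReal_tsum_of_nonneg (fun k => by positivity)
      ((summable_geometric_of_lt_one hr0.le hr1).mul_left _)]
    apply ENNReal.ofReal_le_ofReal
    rw [tsum_mul_left, tsum_geometric_of_lt_one hr0.le hr1]
  have hT0 : 0 ≤ 2 * r ^ (m + 1) * (1 - r)⁻¹ := by positivity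
  have hETr : (μ E).toReal ≤ 2 * r ^ (m + 1) * (1 - r)⁻¹ := by
    rw [← ENNReal.toReal_ofReal hT0]
    exact ENNReal.toReal_mono ENNReal.ofReal_ne_top hEbound
  have hBAr : (μ B).toReal ≤ (μ A).toReal := ENNReal.toReal_mono (measure_ne_top μ A) hBA
  have hABr : (μ A).toReal ≤ (μ B).toReal + (μ E).toReal := by
    have h := ENNReal.toReal_mono
      (ENNReal.add_ne_top.mpr ⟨measure_ne_top μ B, measure_ne_top μ E⟩) hAB
    rwa [ENNReal.toReal_add (measure_ne_top μ B) (measure_ne_top μ E)] at h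
  have hgoalT : 2 * r / (1 - r) * Real.exp (-(m : ℝ) * Δ ^ 2 / 8)
      = 2 * r ^ (m + 1) * (1 - r)⁻¹ := by
    rw [hrpow m, pow_succ, div_eq_mul_inv]
    ring
  rw [hgoalT, abs_le]
  constructor <;> linarith
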